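/- Let p_* = (p_0, p_1, ...) be a partition, let a = (a_1, a_2, ...) be the conjugate partition of p = (p_1, p_2, ...), and let x be an integer. There exists a partition q_* = (q_0, q_1, ...) such that q_* is conjugate-majorized by p_* and |q| = |p| − x if and only if either (a) p_0 = 1 and x = a_1, or (b) p_0 > 1 and (x = a_1 or x ≤ a_2). -/

import Mathlib

/-- An infinite weakly decreasing sequence of nonnegative integers, almost all zero. -/
def IsPartition (p : ℕ → ℕ) : Prop :=
  (∀ i j, i ≤ j → p j ≤ p i) ∧ ∃ N, ∀ i, N ≤ i → p i = 0

/-- `conjPart p k` is the `(k+1)`-st entry of the conjugate partition of `p`,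
where `p i` denotes the `(i+1)`-st entry of `p`; i.e. `#{i : p_i ≥ k+1}`. -/
noncomputable def conjPart (p : ℕ → ℕ) (k : ℕ) : ℕ :=
  Nat.card {i : ℕ | k + 1 ≤ p i}

/-- Sum of all entries of an (almost all zero) sequence. -/
noncomputable def psum (p : ℕ → ℕ) : ℕ := ∑ᶠ i, p i

/-- The tail `(p_1, p_2, …)` of a starred partition `p_* = (p_0, p_1, …)`. -/
def ptail (p : ℕ → ℕ) : ℕ → ℕ := fun i => p (i + 1)

/-- `CMaj s r` : the starred partition `s_*` is conjugate-majorized by `r_*`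
(written `s_* ∠ r_*`): `r_0 = s_0 + 1` and `r_i = s_i + 1` for all
`0 ≤ i ≤ g`, where `g = max {i : r_i > s_i}`. -/
def CMaj (s r : ℕ → ℕ) : Prop :=
  r 0 = s 0 + 1 ∧ ∀ i ≤ sSup {j | s j < r j}, r i = s i + 1

lemma nat_card_Iic (a : ℕ) : Nat.card (Set.Iic a) = a + 1 := by
  rw [Nat.card_eq_fintype_card, ← Set.toFinset_card, Set.toFinset_Iic, Nat.card_Iic]

lemma nat_card_Iio (a : ℕ) : Nat.card (Set.Iio a) = a := by
  rw [Nat.card_eq_fintype_card, ← Set.toFinset_card, Set.toFinset_Iio, Nat.card_Iio]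

lemma mem_iff_lt_ncard {S : Set ℕ} (hfin : S.Finite)
    (hdc : ∀ ⦃i j : ℕ⦄, j ≤ i → i ∈ S → j ∈ S) (i : ℕ) :
    i ∈ S ↔ i < Nat.card S := by
  constructor
  · intro hi
    have h1 : Set.Iic i ⊆ S := fun j hj => hdc hj hi
    have h2 := Nat.card_mono hfin h1
    rw [nat_card_Iic] at h2
    omega
  · intro hi
    by_contra h
    have h1 : S ⊆ Set.Iio i := by
      intro j hj
      by_contra hj'
      exact h (hdc (not_lt.mp hj') hj)
    have h2 := Nat.card_mono (Set.finite_Iio i) h1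
    rw [nat_card_Iio] at h2
    omega

lemma conj_char {p : ℕ → ℕ} (hp : IsPartition p) (k i : ℕ) :
    k + 1 ≤ p (i + 1) ↔ i < conjPart (ptail p) k := by
  obtain ⟨hmono, N, hN⟩ := hp
  have hfin : {j : ℕ | k + 1 ≤ ptail p j}.Finite := by
    apply (Set.finite_Iio N).subset
    intro j hj
    simp only [Set.mem_setOf_eq, ptail] at hj
    simp only [Set.mem_Iio]
    by_contra h
    have := hN (j + 1) (by omega)
    omega
  have hdc : ∀ ⦃a b : ℕ⦄, b ≤ a → a ∈ {j : ℕ | k + 1 ≤ ptail p j} →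
      b ∈ {j : ℕ | k + 1 ≤ ptail p j} := by
    intro a b hba ha
    simp only [Set.mem_setOf_eq, ptail] at ha ⊢
    exact le_trans ha (hmono _ _ (by omega))
  have := mem_iff_lt_ncard hfin hdc i
  simpa [conjPart, ptail] using this

lemma psum_eq_sum {f : ℕ → ℕ} {N : ℕ} (hf : ∀ i, N ≤ i → f i = 0) :
    psum f = ∑ i ∈ Finset.range N, f i := by
  apply finsum_eq_sum_of_support_subset
  intro i hi
  simp only [Function.mem_support] at hi
  simp only [Finset.coe_range, Set.mem_Iio]
  by_contra h
  exact hi (hf i (by omega))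

lemma psum_sub_eq {f g : ℕ → ℕ} {N : ℕ} (hf : ∀ i, N ≤ i → f i = 0)
    (hg : ∀ i, N ≤ i → g i = 0) :
    (psum f : ℤ) - psum g = ∑ i ∈ Finset.range N, ((f i : ℤ) - g i) := by
  rw [psum_eq_sum hf, psum_eq_sum hg, Finset.sum_sub_distrib]
  push_cast
  ring

lemma sum_range_pieces (d : ℕ → ℤ) (a b c N : ℕ) (hab : a ≤ b) (hbc : b ≤ c) (hcN : c ≤ N)
    (h1 : ∀ i < a, d i = 1) (h2 : ∀ i, a ≤ i → i < b → d i = 0)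
    (h3 : ∀ i, b ≤ i → i < c → d i = -1) (h4 : ∀ i, c ≤ i → i < N → d i = 0) :
    ∑ i ∈ Finset.range N, d i = (a : ℤ) - ((c : ℤ) - b) := by
  have haN : a ≤ N := le_trans hab (le_trans hbc hcN)
  have hbN : b ≤ N := le_trans hbc hcN
  rw [Finset.range_eq_Ico,
      ← Finset.sum_Ico_consecutive _ (Nat.zero_le a) haN,
      ← Finset.sum_Ico_consecutive _ hab hbN,
      ← Finset.sum_Ico_consecutive _ hbc hcN]
  have e1 : ∑ i ∈ Finset.Ico 0 a, d i = a := by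
    rw [Finset.sum_congr rfl (fun i hi => h1 i (Finset.mem_Ico.mp hi).2)]
    simp [Nat.card_Ico]
  have e2 : ∑ i ∈ Finset.Ico a b, d i = 0 := by
    rw [Finset.sum_congr rfl (fun i hi => h2 i (Finset.mem_Ico.mp hi).1 (Finset.mem_Ico.mp hi).2)]
    simp
  have e3 : ∑ i ∈ Finset.Ico b c, d i = -((c : ℤ) - b) := by
    rw [Finset.sum_congr rfl (fun i hi => h3 i (Finset.mem_Ico.mp hi).1 (Finset.mem_Ico.mp hi).2)]
    rw [Finset.sum_const, Nat.card_Ico, nsmul_eq_mul, Nat.cast_sub hbc]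
    ring
  have e4 : ∑ i ∈ Finset.Ico c N, d i = 0 := by
    rw [Finset.sum_congr rfl (fun i hi => h4 i (Finset.mem_Ico.mp hi).1 (Finset.mem_Ico.mp hi).2)]
    simp
  rw [e1, e2, e3, e4]
  ring

lemma sum_range_le (d : ℕ → ℤ) (a N : ℕ) (haN : a ≤ N) (h1 : ∀ i < a, d i = 1)
    (h2 : ∀ i, a ≤ i → i < N → d i ≤ 0) : ∑ i ∈ Finset.range N, d i ≤ a := by
  rw [Finset.range_eq_Ico, ← Finset.sum_Ico_consecutive _ (Nat.zero_le a) haN]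
  have e1 : ∑ i ∈ Finset.Ico 0 a, d i = a := by
    rw [Finset.sum_congr rfl (fun i hi => h1 i (Finset.mem_Ico.mp hi).2)]
    simp [Nat.card_Ico]
  have e2 : ∑ i ∈ Finset.Ico a N, d i ≤ 0 := by
    apply Finset.sum_nonpos
    intro i hi
    exact h2 i (Finset.mem_Ico.mp hi).1 (Finset.mem_Ico.mp hi).2
  omega

theorem exists_cmaj_with_weight_iff (p : ℕ → ℕ) (hp : IsPartition p) (x : ℤ) :
    (∃ q : ℕ → ℕ, IsPartition q ∧ CMaj q p ∧
        (psum (ptail q) : ℤ) = (psum (ptail p) : ℤ) - x) ↔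
    ((p 0 = 1 ∧ x = (conjPart (ptail p) 0 : ℤ)) ∨
     (1 < p 0 ∧ (x = (conjPart (ptail p) 0 : ℤ) ∨ x ≤ (conjPart (ptail p) 1 : ℤ)))) := by
  obtain ⟨hpmono, Np, hNp⟩ := hp
  set a1 := conjPart (ptail p) 0 with ha1def
  set a2 := conjPart (ptail p) 1 with ha2def
  have ha1 : ∀ i, 1 ≤ p (i + 1) ↔ i < a1 := fun i => conj_char ⟨hpmono, Np, hNp⟩ 0 i
  have ha2 : ∀ i, 2 ≤ p (i + 1) ↔ i < a2 := fun i => conj_char ⟨hpmono, Np, hNp⟩ 1 i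
  have ha21 : a2 ≤ a1 := by
    by_contra h
    have h1 := (ha2 a1).mpr (by omega)
    have h2 := (ha1 a1).mp (by omega)
    omega
  constructor
  · rintro ⟨q, ⟨hqmono, Nq, hNq⟩, ⟨h0, hg⟩, hsum⟩
    set S : Set ℕ := {j | q j < p j} with hS
    set g := sSup S with hgdef
    have hbdd : BddAbove S := by
      refine ⟨Np, fun j hj => ?_⟩
      simp only [hS, Set.mem_setOf_eq] at hj
      by_contra h
      have := hNp j (by omega)
      omega
    have h0S : (0 : ℕ) ∈ S := by simp only [hS, Set.mem_setOf_eq]; omega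
    have hgS : g ∈ S := Nat.sSup_mem ⟨0, h0S⟩ hbdd
    have hgt : ∀ i, g < i → p i ≤ q i := by
      intro i hi
      by_contra h
      have : i ∈ S := by simp only [hS, Set.mem_setOf_eq]; omega
      have := le_csSup hbdd this
      omega
    set N := max (max Np Nq) (g + 1) with hNdef
    have hvp : ∀ i, N ≤ i → ptail p i = 0 := fun i hi => hNp (i + 1) (by omega)
    have hvq : ∀ i, N ≤ i → ptail q i = 0 := fun i hi => hNq (i + 1) (by omega)
    have hgN : g ≤ N := by omega
    have hx : x = ∑ i ∈ Finset.range N, ((ptail p i : ℤ) - ptail q i) := by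
      have := psum_sub_eq hvp hvq
      omega
    -- terms below g are 1
    have hterm1 : ∀ i < g, ((ptail p i : ℤ) - ptail q i) = 1 := by
      intro i hi
      have := hg (i + 1) (by omega)
      simp only [ptail]
      omega
    -- key: if q g = 0 then x = a1
    have hcore : q g = 0 → x = (a1 : ℤ) := by
      intro hqg
      have hzero : ∀ i, g < i → p i = 0 ∧ q i = 0 := by
        intro i hi
        have h1 := hgt i hi
        have h2 := hqmono g i (by omega)
        omega
      have hga1 : g = a1 := by
        have hle : a1 ≤ g := by
          by_contra h
          have h1 := (ha1 g).mpr (by omega)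
          have := (hzero (g + 1) (by omega)).1
          omega
        have hge : g ≤ a1 := by
          rcases Nat.eq_zero_or_pos g with h | h
          · omega
          · have h1 := hg g le_rfl
            have he : g - 1 + 1 = g := by omega
            have h2 := (ha1 (g - 1)).mp (by rw [he]; omega)
            omega
        omega
      rw [hx, sum_range_pieces _ g g g N le_rfl le_rfl hgN hterm1
        (by omega) (by omega) ?_]
      · omega
      · intro i hgi hiN
        have := hzero (i + 1) (by omega)
        simp only [ptail]
        omega
    have hp0 : 1 ≤ p 0 := by omega
    rcases Nat.lt_or_ge (p 0) 2 with hp01 | hp02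
    · -- p 0 = 1, so q 0 = 0, so q g = 0
      left
      have hq0 : q 0 = 0 := by omega
      have hqg : q g = 0 := by
        have := hqmono 0 g (Nat.zero_le g)
        omega
      exact ⟨by omega, hcore hqg⟩
    · right
      refine ⟨by omega, ?_⟩
      rcases le_or_gt x (a2 : ℤ) with h | h
      · exact Or.inr h
      · left
        -- x > a2, show x = a1 via q g = 0
        have hxg : x ≤ (g : ℤ) := by
          rw [hx]
          apply sum_range_le _ g N hgN hterm1
          intro i hgi hiN
          have := hgt (i + 1) (by omega)
          simp only [ptail]
          omega
        have hga2 : (a2 : ℕ) < g := by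
          have : (a2 : ℤ) < g := lt_of_lt_of_le h hxg
          exact_mod_cast this
        have hgpos : 1 ≤ g := by omega
        have hpg1 : p g ≤ 1 := by
          by_contra hh
          have he : g - 1 + 1 = g := by omega
          have := (ha2 (g - 1)).mp (by rw [he]; omega)
          omega
        have hqg : q g = 0 := by
          have := hg g le_rfl
          omega
        exact hcore hqg
  · rintro (⟨hp0, hx⟩ | ⟨hp0, hx⟩)
    · -- Case A: p 0 = 1, q = 0
      refine ⟨fun _ => 0, ⟨fun i j _ => le_rfl, 0, fun i _ => rfl⟩, ?_, ?_⟩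
      · constructor
        · show p 0 = 0 + 1
          omega
        · intro i hi
          show p i = 0 + 1
          set S : Set ℕ := {j | (fun _ => (0:ℕ)) j < p j} with hS
          have hbdd : BddAbove S := by
            refine ⟨Np, fun j hj => ?_⟩
            simp only [hS, Set.mem_setOf_eq] at hj
            by_contra h
            have := hNp j (by omega)
            omega
          have h0S : (0 : ℕ) ∈ S := by simp only [hS, Set.mem_setOf_eq]; omega
          have hgS : sSup S ∈ S := Nat.sSup_mem ⟨0, h0S⟩ hbdd
          simp only [hS, Set.mem_setOf_eq] at hgS
          have h1 : 1 ≤ p i := le_trans hgS (hpmono i _ hi)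
          have h2 : p i ≤ p 0 := hpmono 0 i (Nat.zero_le i)
          omega
      · -- sum: psum (ptail 0) = 0, need 0 = psum tail p - x, x = a1
        have hq0 : psum (ptail fun _ => (0:ℕ)) = 0 := by
          simp [psum, ptail]
        rw [hq0]
        have hN : a1 ≤ max a1 Np := le_max_left _ _
        have hpsum : (psum (ptail p) : ℤ) =
            ∑ i ∈ Finset.range (max a1 Np), ((ptail p i : ℤ) - ((fun _ => (0:ℕ)) i : ℕ)) := by
          have := psum_sub_eq (f := ptail p) (g := fun _ => 0) (N := max a1 Np)
            (fun i hi => hNp (i + 1) (by omega)) (fun _ _ => rfl)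
          have hz : psum (fun _ => (0:ℕ)) = 0 := by simp [psum]
          beta_reduce at this ⊢
          omega
        rw [hpsum, sum_range_pieces _ a1 a1 a1 (max a1 Np) le_rfl le_rfl hN ?_ (by omega)
          (by omega) ?_]
        · omega
        · intro i hi
          have h1 := (ha1 i).mpr hi
          have h2 := hpmono 0 (i + 1) (by omega)
          simp only [ptail]
          omega
        · intro i hi _
          have h1 : p (i + 1) = 0 := by
            by_contra h
            have := (ha1 i).mp (by omega)
            omega
          simp only [ptail, h1]
          ring
    · rcases hx with hx | hx
      · -- Case B: x = a1, q i = if i ≤ a1 then p i - 1 else p i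
        set q : ℕ → ℕ := fun i => if i ≤ a1 then p i - 1 else p i with hq
        have hppos : ∀ i ≤ a1, 1 ≤ p i := by
          intro i hi
          rcases Nat.eq_zero_or_pos i with h | h
          · subst h; omega
          · have he : i - 1 + 1 = i := by omega
            have := (ha1 (i - 1)).mpr (by omega)
            rw [he] at this
            omega
        have hpz : ∀ i, a1 < i → p i = 0 := by
          intro i hi
          by_contra h
          have he : i - 1 + 1 = i := by omega
          have h1 := (ha1 (i - 1)).mp (by rw [he]; omega)
          omega
        have hqle : ∀ i, q i ≤ p i := by
          intro i
          simp only [hq]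
          split <;> omega
        refine ⟨q, ⟨?_, Np, fun i hi => by have := hNp i hi; have := hqle i; omega⟩, ⟨?_, ?_⟩, ?_⟩
        · -- monotone
          intro i j hij
          simp only [hq]
          by_cases hja : j ≤ a1
          · rw [if_pos hja, if_pos (le_trans hij hja)]
            have := hpmono i j hij
            omega
          · rw [if_neg hja]
            have hpj : p j = 0 := hpz j (by omega)
            omega
        · simp only [hq, if_pos (Nat.zero_le a1)]
          have := hppos 0 (Nat.zero_le a1)
          omega
        · -- ∀ i ≤ sSup S, p i = q i + 1
          have hSeq : {j | q j < p j} = Set.Iic a1 := by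
            ext j
            simp only [Set.mem_setOf_eq, Set.mem_Iic, hq]
            constructor
            · intro hj
              by_contra h
              rw [if_neg h] at hj
              omega
            · intro hj
              rw [if_pos hj]
              have := hppos j hj
              omega
          rw [hSeq, csSup_Iic]
          intro i hi
          simp only [hq, if_pos hi]
          have := hppos i hi
          omega
        · -- sum
          set N := max (a1 + 1) Np with hNdef
          have hD : (psum (ptail p) : ℤ) - psum (ptail q) =
              ∑ i ∈ Finset.range N, ((ptail p i : ℤ) - ptail q i) :=
            psum_sub_eq (fun i hi => hNp (i + 1) (by omega))
              (fun i hi => by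
                have h1 := hNp (i + 1) (show Np ≤ i + 1 by omega)
                have := hqle (i + 1)
                simp only [ptail]
                omega)
          have hcomp : ∑ i ∈ Finset.range N, ((ptail p i : ℤ) - ptail q i) = (a1 : ℤ) := by
            rw [sum_range_pieces _ a1 a1 a1 N le_rfl le_rfl (by omega) ?_ (by omega)
              (by omega) ?_]
            · ring
            · intro i hi
              have h1 := hppos (i + 1) (by omega)
              simp only [ptail, hq, if_pos (show i + 1 ≤ a1 by omega)]
              omega
            · intro i hi _
              simp only [ptail, hq, if_neg (show ¬ (i + 1 ≤ a1) by omega)]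
              ring
          rw [← hD] at hcomp
          omega
      · -- Case C: p 0 ≥ 2, x ≤ a2
        set t : ℕ := (a2 - x).toNat with htdef
        have ht : (t : ℤ) = (a2 : ℤ) - x := by
          simp only [htdef]
          omega
        set q : ℕ → ℕ := fun i => if i ≤ a2 then p i - 1 else if i ≤ a1 + t then 1 else 0
          with hq
        have hp2 : ∀ i ≤ a2, 2 ≤ p i := by
          intro i hi
          rcases Nat.eq_zero_or_pos i with h | h
          · subst h; omega
          · have he : i - 1 + 1 = i := by omega
            have := (ha2 (i - 1)).mpr (by omega)
            rw [he] at this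
            omega
        have hp1 : ∀ i, a2 < i → i ≤ a1 → p i = 1 := by
          intro i hi1 hi2
          have he : i - 1 + 1 = i := by omega
          have h1 := (ha1 (i - 1)).mpr (by omega)
          have h2 := (ha2 (i - 1)).mp
          rw [he] at h1 h2
          omega
        have hpz : ∀ i, a1 < i → p i = 0 := by
          intro i hi
          by_contra h
          have he : i - 1 + 1 = i := by omega
          have h1 := (ha1 (i - 1)).mp (by rw [he]; omega)
          omega
        refine ⟨q, ⟨?_, a1 + t + 1, fun i hi => ?_⟩, ⟨?_, ?_⟩, ?_⟩
        · -- monotone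
          intro i j hij
          simp only [hq]
          by_cases hja : j ≤ a2
          · rw [if_pos hja, if_pos (le_trans hij hja)]
            have := hpmono i j hij
            omega
          · rw [if_neg hja]
            by_cases hjb : j ≤ a1 + t
            · rw [if_pos hjb]
              by_cases hia : i ≤ a2
              · rw [if_pos hia]
                have := hp2 i hia
                omega
              · rw [if_neg hia, if_pos (le_trans hij hjb)]
            · rw [if_neg hjb]
              split <;> [skip; split] <;> omega
        · -- vanishing
          simp only [hq]
          rw [if_neg (by omega), if_neg (by omega)]
        · simp only [hq, if_pos (Nat.zero_le a2)]
          omega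
        · -- CMaj second part
          have hSeq : {j | q j < p j} = Set.Iic a2 := by
            ext j
            simp only [Set.mem_setOf_eq, Set.mem_Iic, hq]
            constructor
            · intro hj
              by_contra h
              rw [if_neg h] at hj
              rcases le_or_gt j (a1 + t) with h2 | h2
              · rw [if_pos h2] at hj
                rcases le_or_gt j a1 with h3 | h3
                · have := hp1 j (by omega) h3
                  omega
                · have := hpz j h3
                  omega
              · rw [if_neg (by omega)] at hj
                have := hpz j (by omega)
                omega
            · intro hj
              rw [if_pos hj]
              have := hp2 j hj
              omega
          rw [hSeq, csSup_Iic]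
          intro i hi
          simp only [hq, if_pos hi]
          have := hp2 i hi
          omega
        · -- sum
          set N := max (a1 + t + 1) Np with hNdef
          have hD : (psum (ptail p) : ℤ) - psum (ptail q) =
              ∑ i ∈ Finset.range N, ((ptail p i : ℤ) - ptail q i) :=
            psum_sub_eq (fun i hi => hNp (i + 1) (by omega))
              (fun i hi => by
                simp only [ptail, hq]
                rw [if_neg (by omega), if_neg (by omega)])
          have hcomp : ∑ i ∈ Finset.range N, ((ptail p i : ℤ) - ptail q i) =
              (a2 : ℤ) - (((a1 + t : ℕ) : ℤ) - (a1 : ℤ)) := by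
            rw [sum_range_pieces _ a2 a1 (a1 + t) N ha21 (by omega) (by omega) ?_ ?_ ?_ ?_]
            · intro i hi
              have h1 := hp2 (i + 1) (by omega)
              simp only [ptail, hq, if_pos (show i + 1 ≤ a2 by omega)]
              omega
            · intro i hi1 hi2
              have h1 := hp1 (i + 1) (by omega) (by omega)
              simp only [ptail, hq]
              rw [if_neg (by omega), if_pos (by omega), h1]
              ring
            · intro i hi1 hi2
              have h1 := hpz (i + 1) (by omega)
              simp only [ptail, hq]
              rw [if_neg (by omega), if_pos (by omega), h1]
              ring
            · intro i hi1 hi2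
              have h1 := hpz (i + 1) (by omega)
              simp only [ptail, hq]
              rw [if_neg (by omega), if_neg (by omega), h1]
              ring
          rw [hcomp] at hD
          push_cast at hD ⊢
          omega
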